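/- For a connected graph G of order n ≥ 2, dem(G) = n-1 if and only if G is the complete graph on n vertices. -/
import Mathlib


open SimpleGraph

/-- `e` is monitored by vertex `x` in `G`: some vertex `y` has its distance to `x`
changed when `e` is deleted (distances in `ℕ∞`, `⊤` if disconnected). -/
def monitors {V : Type*} (G : SimpleGraph V) (x : V) (e : Sym2 V) : Prop :=
  ∃ y : V, G.edist x y ≠ (G.deleteEdges {e}).edist x y

/-- `M` is a distance-edge-monitoring set of `G`. -/
def IsDEMSet {V : Type*} (G : SimpleGraph V) (M : Set V) : Prop :=
  ∀ e ∈ G.edgeSet, ∃ x ∈ M, monitors G x e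

/-- The smallest size of a distance-edge-monitoring set of `G`. -/
noncomputable def dem (V : Type*) [Fintype V] (G : SimpleGraph V) : ℕ :=
  sInf {k | ∃ M : Finset V, M.card = k ∧ IsDEMSet G ↑M}

/-- The set `P(M, e)` of pairs `(x, y)`, `x ∈ M`, whose distance changes when `e` is deleted. -/
def pairs {V : Type*} (G : SimpleGraph V) (M : Set V) (e : Sym2 V) : Set (V × V) :=
  {p | p.1 ∈ M ∧ G.edist p.1 p.2 ≠ (G.deleteEdges {e}).edist p.1 p.2}

/-- `C` is a vertex cover of `G`. -/
def IsVC {V : Type*} (G : SimpleGraph V) (C : Set V) : Prop :=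
  ∀ e ∈ G.edgeSet, ∃ v ∈ C, v ∈ e

/-- The vertex cover number of `G`. -/
noncomputable def vcNum (V : Type*) [Fintype V] (G : SimpleGraph V) : ℕ :=
  sInf {k | ∃ C : Finset V, C.card = k ∧ IsVC G ↑C}

/-- The feedback edge set number: minimum number of edges whose deletion leaves a forest. -/
noncomputable def fes (V : Type*) [Fintype V] (G : SimpleGraph V) : ℕ :=
  sInf {k | ∃ F : Finset (Sym2 V), F.card = k ∧ (G.deleteEdges ↑F).IsAcyclic}

lemma monitors_of_adj {V : Type*} {G : SimpleGraph V} {a b : V} (h : G.Adj a b) :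
    monitors G a s(a, b) := by
  refine ⟨b, ?_⟩
  have h1 : G.edist a b = 1 := edist_eq_one_iff_adj.mpr h
  have h2 : ¬ (G.deleteEdges {s(a,b)}).Adj a b := by simp
  rw [h1]
  intro hc
  exact h2 (edist_eq_one_iff_adj.mp hc.symm)

lemma isDEM_of_cover {V : Type*} {G : SimpleGraph V} {M : Set V}
    (h : ∀ e ∈ G.edgeSet, ∃ v ∈ M, v ∈ e) : IsDEMSet G M := by
  intro e he
  induction e with
  | _ a b =>
    obtain ⟨v, hv, hve⟩ := h s(a,b) he
    rw [Sym2.mem_iff] at hve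
    rw [mem_edgeSet] at he
    rcases hve with rfl | rfl
    · exact ⟨v, hv, monitors_of_adj he⟩
    · exact ⟨v, hv, by rw [Sym2.eq_swap]; exact monitors_of_adj he.symm⟩
theorem stmt10 {V : Type*} [Fintype V] (G : SimpleGraph V) (hG : G.Connected)
    (hn : 2 ≤ Fintype.card V) :
    dem V G = Fintype.card V - 1 ↔ G = ⊤ := by
  classical
  constructor
  · intro h
    by_contra hne
    -- G not complete: get nonadjacent u ≠ v
    have : ∃ u v : V, u ≠ v ∧ ¬ G.Adj u v := by
      by_contra hc
      push_neg at hc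
      apply hne
      ext a b
      simp only [top_adj]
      exact ⟨fun hab => hab.ne, fun hab => hc a b hab⟩
    obtain ⟨u, v, huv, hadj⟩ := this
    set M : Finset V := Finset.univ \ {u, v} with hM
    have hcard : M.card = Fintype.card V - 2 := by
      rw [hM, Finset.card_sdiff_of_subset (Finset.subset_univ _), Finset.card_univ,
        Finset.card_insert_of_notMem (by simpa using huv), Finset.card_singleton]
    have hdem : IsDEMSet G ↑M := by
      apply isDEM_of_cover
      intro e he
      induction e with
      | _ a b =>
        rw [mem_edgeSet] at he
        have hmem : ∀ w : V, w ≠ u → w ≠ v → (w : V) ∈ (↑M : Set V) := by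
          intro w h1 h2
          simp [hM, h1, h2]
        by_cases hau : a = u
        · by_cases hbv : b = v
          · exact absurd (hau ▸ hbv ▸ he) hadj
          · refine ⟨b, hmem b ?_ hbv, by simp⟩
            rintro rfl
            exact (hau ▸ he).ne rfl
        · by_cases hav : a = v
          · by_cases hbu : b = u
            · exact absurd (hav ▸ hbu ▸ he).symm hadj
            · refine ⟨b, hmem b hbu ?_, by simp⟩
              rintro rfl
              exact (hav ▸ he).ne rfl
          · exact ⟨a, hmem a hau hav, by simp⟩
    have hle : dem V G ≤ Fintype.card V - 2 :=
      Nat.sInf_le ⟨M, hcard, hdem⟩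
    omega
  · rintro rfl
    have hne : (Finset.univ : Finset V).Nonempty := by
      rw [← Finset.card_pos, Finset.card_univ]; omega
    obtain ⟨w, -⟩ := hne
    set M : Finset V := Finset.univ.erase w with hM
    have hcard : M.card = Fintype.card V - 1 := by
      rw [hM, Finset.card_erase_of_mem (Finset.mem_univ w), Finset.card_univ]
    have hdem : IsDEMSet (⊤ : SimpleGraph V) ↑M := by
      apply isDEM_of_cover
      intro e he
      induction e with
      | _ a b =>
        rw [mem_edgeSet, top_adj] at he
        by_cases haw : a = w
        · have hbw : b ≠ w := fun hb => he (haw.trans hb.symm)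
          exact ⟨b, by simp [hM, hbw], by simp⟩
        · exact ⟨a, by simp [hM, haw], by simp⟩
    refine le_antisymm (Nat.sInf_le ⟨M, hcard, hdem⟩) (le_csInf ⟨_, M, hcard, hdem⟩ ?_)
    rintro k ⟨N, hNcard, hN⟩
    by_contra hk
    push_neg at hk
    -- N misses at least two vertices
    have hcard2 : 1 < Nᶜ.card := by
      rw [Finset.card_compl]
      omega
    obtain ⟨u, hu, v, hv, huv⟩ := Finset.one_lt_card.mp hcard2
    rw [Finset.mem_compl] at hu hv
    obtain ⟨x, hx, y, hy⟩ := hN s(u, v) (by rwa [mem_edgeSet, top_adj])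
    apply hy
    have hxu : x ≠ u := fun h => hu (h ▸ hx)
    have hxv : x ≠ v := fun h => hv (h ▸ hx)
    by_cases hxy : x = y
    · subst hxy; rw [SimpleGraph.edist_self, SimpleGraph.edist_self]
    · have h1 : (⊤ : SimpleGraph V).edist x y = 1 := edist_eq_one_iff_adj.mpr hxy
      have h2 : ((⊤ : SimpleGraph V).deleteEdges {s(u, v)}).Adj x y := by
        rw [deleteEdges_adj]
        refine ⟨hxy, ?_⟩
        rw [Set.mem_singleton_iff, Sym2.eq_iff]
        rintro (⟨rfl, rfl⟩ | ⟨rfl, rfl⟩) <;> simp_all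
      rw [h1, (edist_eq_one_iff_adj.mpr h2).symm]
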